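/- Let (p_n) be a sequence of integers with p_n ≥ 2 for all n and p_n → ∞, and let (κ_n) be a sequence in (0,∞) with κ_n/p_n → 0. Then the sequence (p_n²/κ_n²)( √(p_n ẽ₂(p_n,κ_n)) − 1 ) is bounded; that is, √(p_n ẽ₂(p_n,κ_n)) − 1 = O(κ_n²/p_n²) as n → ∞. -/

import Mathlib

open MeasureTheory intervalIntegral Filter

/-- `mInt p κ ℓ = ∫_{-1}^1 u^ℓ (1-u²)^{(p-3)/2} exp(κ u) du`. -/
noncomputable def mInt (p : ℕ) (κ : ℝ) (ℓ : ℕ) : ℝ :=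
  ∫ u in (-1 : ℝ)..1, u ^ ℓ * (1 - u ^ 2) ^ (((p : ℝ) - 3) / 2) * Real.exp (κ * u)

/-- `e₁(p,κ) = E[U]` under `FvML_p(θ,κ)`. -/
noncomputable def e1 (p : ℕ) (κ : ℝ) : ℝ := mInt p κ 1 / mInt p κ 0

/-- `e₂(p,κ) = E[U²]` under `FvML_p(θ,κ)`. -/
noncomputable def e2 (p : ℕ) (κ : ℝ) : ℝ := mInt p κ 2 / mInt p κ 0

/-- `ẽ₂(p,κ) = Var[U]` under `FvML_p(θ,κ)`. -/
noncomputable def etilde2 (p : ℕ) (κ : ℝ) : ℝ := e2 p κ - (e1 p κ) ^ 2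

lemma cont_rpow {c : ℝ} (hc : 0 < c) : Continuous fun u : ℝ => (1 - u ^ 2) ^ c := by
  have h : Continuous fun u : ℝ => (1 - u ^ 2) := by continuity
  refine continuous_iff_continuousAt.2 fun x => ?_
  exact (Real.continuousAt_rpow_const _ _ (Or.inr hc.le)).comp h.continuousAt

lemma cont_integrand (κ : ℝ) (ℓ : ℕ) {c : ℝ} (hc : 0 < c) :
    Continuous fun u : ℝ => u ^ ℓ * (1 - u ^ 2) ^ c * Real.exp (κ * u) :=
  ((continuous_pow ℓ).mul (cont_rpow hc)).mul
    (Real.continuous_exp.comp (continuous_const.mul continuous_id))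

lemma exp_pos_cast (p : ℕ) (hp : 5 ≤ p) : 0 < ((p : ℝ) - 3) / 2 := by
  have : (5 : ℝ) ≤ (p : ℝ) := by exact_mod_cast hp
  linarith

lemma mInt_pos (p : ℕ) (hp : 5 ≤ p) (κ : ℝ) : 0 < mInt p κ 0 := by
  have hc := exp_pos_cast p hp
  refine intervalIntegral_pos_of_pos_on
    ((cont_integrand κ 0 hc).intervalIntegrable _ _) (fun x hx => ?_) (by norm_num)
  obtain ⟨h1, h2⟩ := hx
  have hx2 : 0 < 1 - x ^ 2 := by nlinarith
  have := Real.rpow_pos_of_pos hx2 (((p : ℝ) - 3) / 2)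
  have := Real.exp_pos (κ * x)
  simp only [pow_zero, one_mul]
  positivity

lemma mInt_sq_nonneg (p : ℕ) (κ : ℝ) (k : ℕ) : 0 ≤ mInt p κ (2 * k) := by
  apply intervalIntegral.integral_nonneg (by norm_num)
  intro u hu
  have h1 : 0 ≤ (u ^ (2 * k) : ℝ) := (even_two_mul k).pow_nonneg u
  have h2 : (0:ℝ) ≤ (1 - u ^ 2) ^ (((p : ℝ) - 3) / 2) :=
    Real.rpow_nonneg (by nlinarith [hu.1, hu.2]) _
  exact mul_nonneg (mul_nonneg h1 h2) (Real.exp_pos _).le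

lemma mInt_succ (p : ℕ) (hp : 5 ≤ p) (κ : ℝ) (ℓ : ℕ) :
    mInt (p + 2) κ ℓ = mInt p κ ℓ - mInt p κ (ℓ + 2) := by
  have hα0 : 0 < ((p : ℝ) - 3) / 2 := exp_pos_cast p hp
  have hc2 : 0 < ((p : ℝ) - 3) / 2 + 1 := by linarith
  unfold mInt
  rw [← intervalIntegral.integral_sub
      ((cont_integrand κ ℓ hα0).intervalIntegrable _ _)
      ((cont_integrand κ (ℓ+2) hα0).intervalIntegrable _ _)]
  apply intervalIntegral.integral_congr
  intro u _
  have hexp : (((p + 2 : ℕ) : ℝ) - 3) / 2 = ((p : ℝ) - 3) / 2 + 1 := by push_cast; ring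
  dsimp only
  rw [hexp]
  rcases eq_or_ne (1 - u ^ 2) 0 with h | h
  · rw [h, Real.zero_rpow hc2.ne']
    have hu2 : u ^ 2 = 1 := by linarith
    have : u ^ (ℓ + 2) = u ^ ℓ := by rw [pow_add, hu2, mul_one]
    rw [this]; ring
  · rw [Real.rpow_add_one h]; ring

lemma ibp0 (p : ℕ) (hp : 5 ≤ p) (κ : ℝ) :
    ((p : ℝ) - 1) * mInt p κ 1 = κ * mInt (p + 2) κ 0 := by
  set α := ((p : ℝ) - 3) / 2 with hα
  have hα0 : 0 < α := exp_pos_cast p hp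
  have hβ1 : (1 : ℝ) ≤ α + 1 := by linarith
  have key : ∀ u : ℝ, HasDerivAt (fun u : ℝ => (1 - u ^ 2) ^ (α + 1) * Real.exp (κ * u))
      ((α + 1) * (1 - u ^ 2) ^ α * (-(2 * u)) * Real.exp (κ * u)
        + (1 - u ^ 2) ^ (α + 1) * (Real.exp (κ * u) * κ)) u := by
    intro u
    have h1 : HasDerivAt (fun u : ℝ => 1 - u ^ 2) (-(2 * u)) u := by
      simpa using ((hasDerivAt_pow 2 u).const_sub 1)
    have h2 := (Real.hasDerivAt_rpow_const (x := 1 - u ^ 2) (p := α + 1) (Or.inr hβ1)).comp u h1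
    rw [show α + 1 - 1 = α from by ring] at h2
    have h3 : HasDerivAt (fun u : ℝ => Real.exp (κ * u)) (Real.exp (κ * u) * κ) u := by
      simpa [Function.comp_def] using (Real.hasDerivAt_exp (κ * u)).comp u ((hasDerivAt_id u).const_mul κ)
    exact h2.mul h3
  have c1 : Continuous fun u : ℝ => (α + 1) * (1 - u ^ 2) ^ α * (-(2 * u)) * Real.exp (κ * u) := by
    apply Continuous.mul
    apply Continuous.mul
    · exact continuous_const.mul (cont_rpow hα0)
    · continuity
    · exact Real.continuous_exp.comp (continuous_const.mul continuous_id)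
  have c2 : Continuous fun u : ℝ => (1 - u ^ 2) ^ (α + 1) * (Real.exp (κ * u) * κ) := by
    apply (cont_rpow (by linarith : (0:ℝ) < α + 1)).mul
    exact (Real.continuous_exp.comp (continuous_const.mul continuous_id)).mul continuous_const
  have hint : (∫ u in (-1:ℝ)..1, ((α + 1) * (1 - u ^ 2) ^ α * (-(2 * u)) * Real.exp (κ * u)
        + (1 - u ^ 2) ^ (α + 1) * (Real.exp (κ * u) * κ))) = 0 := by
    rw [intervalIntegral.integral_eq_sub_of_hasDerivAt (fun u _ => key u)
        ((c1.add c2).intervalIntegrable _ _)]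
    norm_num [Real.zero_rpow (by linarith : α + 1 ≠ 0)]
  rw [intervalIntegral.integral_add (c1.intervalIntegrable _ _) (c2.intervalIntegrable _ _)] at hint
  have e1 : (∫ u in (-1:ℝ)..1, (α + 1) * (1 - u ^ 2) ^ α * (-(2 * u)) * Real.exp (κ * u))
      = (-(2 * (α + 1))) * mInt p κ 1 := by
    rw [mInt, ← intervalIntegral.integral_const_mul]
    apply intervalIntegral.integral_congr
    intro u _; ring
  have e2 : (∫ u in (-1:ℝ)..1, (1 - u ^ 2) ^ (α + 1) * (Real.exp (κ * u) * κ))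
      = κ * mInt (p + 2) κ 0 := by
    rw [mInt, ← intervalIntegral.integral_const_mul]
    apply intervalIntegral.integral_congr
    intro u _
    rw [show (((p + 2 : ℕ) : ℝ) - 3) / 2 = α + 1 from by rw [hα]; push_cast; ring]
    ring
  rw [e1, e2] at hint
  have h2α : 2 * (α + 1) = (p : ℝ) - 1 := by rw [hα]; ring
  linear_combination -hint - mInt p κ 1 * h2α

lemma ibp1 (p : ℕ) (hp : 5 ≤ p) (κ : ℝ) :
    ((p : ℝ) - 1) * mInt p κ 2 = mInt (p + 2) κ 0 + κ * mInt (p + 2) κ 1 := by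
  set α := ((p : ℝ) - 3) / 2 with hα
  have hα0 : 0 < α := exp_pos_cast p hp
  have hβ1 : (1 : ℝ) ≤ α + 1 := by linarith
  have key : ∀ u : ℝ, HasDerivAt (fun u : ℝ => u * (1 - u ^ 2) ^ (α + 1) * Real.exp (κ * u))
      ((1 - u ^ 2) ^ (α + 1) * Real.exp (κ * u)
        + (α + 1) * (1 - u ^ 2) ^ α * (-(2 * u)) * u * Real.exp (κ * u)
        + u * (1 - u ^ 2) ^ (α + 1) * (Real.exp (κ * u) * κ)) u := by
    intro u
    have h1 : HasDerivAt (fun u : ℝ => 1 - u ^ 2) (-(2 * u)) u := by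
      simpa using ((hasDerivAt_pow 2 u).const_sub 1)
    have h2 := (Real.hasDerivAt_rpow_const (x := 1 - u ^ 2) (p := α + 1) (Or.inr hβ1)).comp u h1
    rw [show α + 1 - 1 = α from by ring] at h2
    have h3 : HasDerivAt (fun u : ℝ => Real.exp (κ * u)) (Real.exp (κ * u) * κ) u := by
      simpa [Function.comp_def] using (Real.hasDerivAt_exp (κ * u)).comp u ((hasDerivAt_id u).const_mul κ)
    have h4 := ((hasDerivAt_id' (x := u)).mul h2).mul h3
    simp only [Function.comp_def] at h4
    refine h4.congr_deriv ?_
    change _ + u * (1 - u ^ 2) ^ (α + 1) * (Real.exp (κ * u) * κ) = _; ring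
  have c0 : Continuous fun u : ℝ => (1 - u ^ 2) ^ (α + 1) * Real.exp (κ * u) :=
    (cont_rpow (by linarith : (0:ℝ) < α + 1)).mul
      (Real.continuous_exp.comp (continuous_const.mul continuous_id))
  have c1 : Continuous fun u : ℝ =>
      (α + 1) * (1 - u ^ 2) ^ α * (-(2 * u)) * u * Real.exp (κ * u) := by
    apply Continuous.mul
    apply Continuous.mul
    apply Continuous.mul
    · exact continuous_const.mul (cont_rpow hα0)
    · continuity
    · exact continuous_id
    · exact Real.continuous_exp.comp (continuous_const.mul continuous_id)
  have c2 : Continuous fun u : ℝ => u * (1 - u ^ 2) ^ (α + 1) * (Real.exp (κ * u) * κ) := by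
    apply Continuous.mul
    · exact continuous_id.mul (cont_rpow (by linarith : (0:ℝ) < α + 1))
    · exact (Real.continuous_exp.comp (continuous_const.mul continuous_id)).mul continuous_const
  have hint : (∫ u in (-1:ℝ)..1, ((1 - u ^ 2) ^ (α + 1) * Real.exp (κ * u)
        + (α + 1) * (1 - u ^ 2) ^ α * (-(2 * u)) * u * Real.exp (κ * u)
        + u * (1 - u ^ 2) ^ (α + 1) * (Real.exp (κ * u) * κ))) = 0 := by
    rw [intervalIntegral.integral_eq_sub_of_hasDerivAt (fun u _ => key u)
        (((c0.add c1).add c2).intervalIntegrable _ _)]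
    norm_num [Real.zero_rpow (by linarith : α + 1 ≠ 0)]
  rw [intervalIntegral.integral_add (f := fun u => (1 - u ^ 2) ^ (α + 1) * Real.exp (κ * u)
      + (α + 1) * (1 - u ^ 2) ^ α * (-(2 * u)) * u * Real.exp (κ * u))
      ((c0.add c1).intervalIntegrable _ _) (c2.intervalIntegrable _ _),
    intervalIntegral.integral_add (c0.intervalIntegrable _ _) (c1.intervalIntegrable _ _)] at hint
  have hexp2 : (((p + 2 : ℕ) : ℝ) - 3) / 2 = α + 1 := by rw [hα]; push_cast; ring
  have e0 : (∫ u in (-1:ℝ)..1, (1 - u ^ 2) ^ (α + 1) * Real.exp (κ * u)) = mInt (p + 2) κ 0 := by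
    rw [mInt]
    apply intervalIntegral.integral_congr
    intro u _; rw [hexp2]; ring
  have e1 : (∫ u in (-1:ℝ)..1, (α + 1) * (1 - u ^ 2) ^ α * (-(2 * u)) * u * Real.exp (κ * u))
      = (-(2 * (α + 1))) * mInt p κ 2 := by
    rw [mInt, ← intervalIntegral.integral_const_mul]
    apply intervalIntegral.integral_congr
    intro u _; ring
  have e2 : (∫ u in (-1:ℝ)..1, u * (1 - u ^ 2) ^ (α + 1) * (Real.exp (κ * u) * κ))
      = κ * mInt (p + 2) κ 1 := by
    rw [mInt, ← intervalIntegral.integral_const_mul]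
    apply intervalIntegral.integral_congr
    intro u _; rw [hexp2]; ring
  rw [e0, e1, e2] at hint
  have h2α : 2 * (α + 1) = (p : ℝ) - 1 := by rw [hα]; ring
  linear_combination -hint - mInt p κ 2 * h2α

set_option maxHeartbeats 1000000 in
lemma abstract_seq (P κ : ℝ) (hP : (100:ℝ) ≤ P) (hκ2 : κ^2 ≤ P^2/100)
    (ρ : ℕ → ℝ) (hρpos : ∀ j, 0 < ρ j) (hρ1 : ∀ j, ρ j ≤ 1)
    (hE : ∀ j : ℕ, (P + 2*j) * (1 - ρ j) * (P + 2*j + 1)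
      = (P + 2*j + 1) + κ^2 * (ρ j * ρ (j+1))) :
    |ρ 0 - ρ 1| ≤ 2*(2/P^2 + 5*κ^2/P^3) := by
  have hP0 : (0:ℝ) < P := by linarith
  have hYnn : ∀ j, (0:ℝ) ≤ |ρ j - ρ (j+1)| := fun j => abs_nonneg _
  have hY1 : ∀ j, |ρ j - ρ (j+1)| ≤ 1 := by
    intro j
    rw [abs_le]
    constructor
    · linarith [hρpos j, hρ1 (j+1)]
    · linarith [hρpos (j+1), hρ1 j]
  have hrec : ∀ j, |ρ j - ρ (j+1)| ≤ 2/P^2 + 5*κ^2/P^3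
      + κ^2/P^2*(|ρ j - ρ (j+1)| + |ρ (j+1) - ρ (j+2)|) := by
    intro j
    have h1 := hE j
    have h2 := hE (j+1)
    push_cast at h2
    set A := P + 2*(j:ℝ) with hA
    have h2' : (A+2) * (1 - ρ (j+1)) * (A+3) = (A+3) + κ^2 * (ρ (j+1) * ρ (j+2)) := by
      rw [hA]
      linear_combination h2
    have hA100 : (100:ℝ) ≤ A := by
      have : (0:ℝ) ≤ (j:ℝ) := Nat.cast_nonneg j
      rw [hA]; linarith
    have hA0 : (0:ℝ) < A := by linarith
    have hPA : P ≤ A := by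
      have : (0:ℝ) ≤ (j:ℝ) := Nat.cast_nonneg j
      rw [hA]; linarith
    have hid : (ρ j - ρ (j+1)) * (A*(A+1)*(A+2)*(A+3))
        = -(2*(A+1)*(A+3)) + κ^2*(ρ (j+1))*(ρ (j+2) - ρ j)*(A*(A+1))
          - κ^2*(ρ j*ρ (j+1))*(4*A+6) := by
      linear_combination (-(A+2)*(A+3)) * h1 + (A*(A+1)) * h2'
    have hD : (0:ℝ) < A*(A+1)*(A+2)*(A+3) :=
      mul_pos (mul_pos (mul_pos hA0 (by linarith)) (by linarith)) (by linarith)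
    set S := |ρ j - ρ (j+1)| + |ρ (j+1) - ρ (j+2)| with hS
    have hSnn : 0 ≤ S := by rw [hS]; positivity
    have hzx : |ρ (j+2) - ρ j| ≤ S := by
      have he : ρ (j+2) - ρ j = -((ρ j - ρ (j+1)) + (ρ (j+1) - ρ (j+2))) := by ring
      rw [he, abs_neg, hS]
      exact abs_add_le _ _
    have hzx1 : ρ (j+2) - ρ j ≤ S := (le_abs_self _).trans hzx
    have hzx2 : -S ≤ ρ (j+2) - ρ j := by
      have := (neg_abs_le (ρ (j+2) - ρ j))
      linarith
    have hyS : 0 ≤ (1 - ρ (j+1)) * S :=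
      mul_nonneg (by linarith [hρ1 (j+1)]) hSnn
    have hk1u : ρ (j+1) * (ρ (j+2) - ρ j) ≤ S := by
      have h1' : 0 ≤ ρ (j+1) * (S - (ρ (j+2) - ρ j)) :=
        mul_nonneg (hρpos (j+1)).le (by linarith)
      nlinarith [h1', hyS]
    have hk1l : -S ≤ ρ (j+1) * (ρ (j+2) - ρ j) := by
      have h1' : 0 ≤ ρ (j+1) * ((ρ (j+2) - ρ j) + S) :=
        mul_nonneg (hρpos (j+1)).le (by linarith)
      nlinarith [h1', hyS]
    have hxynn : 0 ≤ ρ j * ρ (j+1) := mul_nonneg (hρpos j).le (hρpos (j+1)).le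
    have hxy1 : ρ j * ρ (j+1) ≤ 1 :=
      mul_le_one₀ (hρ1 j) (hρpos (j+1)).le (hρ1 (j+1))
    have habs : |ρ j - ρ (j+1)| * (A*(A+1)*(A+2)*(A+3))
        ≤ 2*(A+1)*(A+3) + κ^2*S*(A*(A+1)) + κ^2*(4*A+6) := by
      have hp1 : 0 ≤ κ^2 * (A*(A+1)) * (S - ρ (j+1)*(ρ (j+2) - ρ j)) :=
        mul_nonneg (mul_nonneg (sq_nonneg κ) (by positivity)) (by linarith)
      have hp1' : 0 ≤ κ^2 * (A*(A+1)) * (S + ρ (j+1)*(ρ (j+2) - ρ j)) :=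
        mul_nonneg (mul_nonneg (sq_nonneg κ) (by positivity)) (by linarith)
      have hp2 : 0 ≤ κ^2 * (4*A+6) * (1 + ρ j*ρ (j+1)) :=
        mul_nonneg (mul_nonneg (sq_nonneg κ) (by linarith)) (by linarith)
      have hp2' : 0 ≤ κ^2 * (4*A+6) * (1 - ρ j*ρ (j+1)) :=
        mul_nonneg (mul_nonneg (sq_nonneg κ) (by linarith)) (by linarith)
      rcases abs_cases (ρ j - ρ (j+1)) with ⟨he, _⟩ | ⟨he, _⟩ <;> rw [he]
      · linarith [hid, hp1, hp2, sq_nonneg A, hA0.le]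
      · linarith [hid, hp1', hp2', sq_nonneg A, hA0.le]
    have hPmul : P*P ≤ A*A := mul_self_le_mul_self hP0.le hPA
    have hPP : P^2 ≤ A*(A+2) := by linarith [hPmul, hA0.le]
    have hPP2 : P^2 ≤ (A+2)*(A+3) := by linarith [hPmul, hA0.le]
    have t1 : 2*(A+1)*(A+3)*P^3 ≤ 2*P*(A*(A+1)*(A+2)*(A+3)) := by
      linarith [mul_le_mul_of_nonneg_left hPP
        (by positivity : (0:ℝ) ≤ 2*P*((A+1)*(A+3)))]
    have t2 : κ^2*S*(A*(A+1))*P^3 ≤ κ^2*S*P*(A*(A+1)*(A+2)*(A+3)) := by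
      linarith [mul_le_mul_of_nonneg_left hPP2
        (by positivity : (0:ℝ) ≤ κ^2*S*P*(A*(A+1)))]
    have t3 : κ^2*(4*A+6)*P^3 ≤ 5*κ^2*(A*(A+1)*(A+2)*(A+3)) := by
      have hPA3 : P^3 ≤ A^3 := pow_le_pow_left₀ hP0.le hPA 3
      have tA : (4*A+6)*A^3 ≤ 5*(A*(A+1)*(A+2)*(A+3)) := by
        nlinarith [pow_nonneg hA0.le 4, pow_nonneg hA0.le 3, sq_nonneg A, hA0.le]
      calc κ^2*(4*A+6)*P^3 ≤ κ^2*(4*A+6)*A^3 := by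
            have := mul_le_mul_of_nonneg_left hPA3
              (by positivity : (0:ℝ) ≤ κ^2*(4*A+6))
            linarith [this]
        _ ≤ 5*κ^2*(A*(A+1)*(A+2)*(A+3)) := by
            linarith [mul_le_mul_of_nonneg_left tA (sq_nonneg κ)]
    have hT : 2/P^2 + 5*κ^2/P^3 + κ^2/P^2*(|ρ j - ρ (j+1)| + |ρ (j+1) - ρ (j+2)|)
        = (2*P + κ^2*S*P + 5*κ^2)/P^3 := by
      rw [← hS]
      field_simp
      ring
    rw [hT, le_div_iff₀ (by positivity : (0:ℝ) < P^3)]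
    refine le_of_mul_le_mul_right ?_ hD
    calc |ρ j - ρ (j+1)| * P^3 * (A*(A+1)*(A+2)*(A+3))
        = (|ρ j - ρ (j+1)| * (A*(A+1)*(A+2)*(A+3))) * P^3 := by ring
      _ ≤ (2*(A+1)*(A+3) + κ^2*S*(A*(A+1)) + κ^2*(4*A+6)) * P^3 :=
          mul_le_mul_of_nonneg_right habs (by positivity)
      _ ≤ (2*P + κ^2*S*P + 5*κ^2) * (A*(A+1)*(A+2)*(A+3)) := by
          linarith [t1, t2, t3]
  -- geometric absorption
  have hA0nn : (0:ℝ) ≤ 2/P^2 + 5*κ^2/P^3 := by positivity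
  have hq : κ^2/P^2 ≤ 1/100 := by
    rw [div_le_iff₀ (by positivity)]
    linarith
  have hqnn : (0:ℝ) ≤ κ^2/P^2 := by positivity
  have hstep : ∀ n : ℕ, ∀ j, |ρ j - ρ (j+1)| ≤ 2*(2/P^2 + 5*κ^2/P^3) + 2*(1/2:ℝ)^n := by
    intro n
    induction n with
    | zero =>
      intro j
      have := hY1 j
      norm_num
      linarith
    | succ n ih =>
      intro j
      have h := hrec j
      have h2 := ih (j+1)
      have ht : (0:ℝ) < (1/2:ℝ)^n := by positivity
      have hpow : ((1:ℝ)/2)^(n+1) = (1/2:ℝ)^n/2 := by ring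
      rw [hpow]
      have hm1 : κ^2/P^2 * |ρ j - ρ (j+1)| ≤ 1/100 * |ρ j - ρ (j+1)| :=
        mul_le_mul_of_nonneg_right hq (hYnn j)
      have hm2 : κ^2/P^2 * |ρ (j+1) - ρ (j+2)| ≤ 1/100 *
          (2*(2/P^2 + 5*κ^2/P^3) + 2*(1/2:ℝ)^n) :=
        mul_le_mul hq h2 (hYnn (j+1)) (by norm_num)
      have := hY1 j
      linarith [hm1, hm2, h, hA0nn, ht]
  have hlim : Tendsto (fun n : ℕ => 2*(2/P^2 + 5*κ^2/P^3) + 2*(1/2:ℝ)^n) atTop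
      (nhds (2*(2/P^2 + 5*κ^2/P^3))) := by
    have h0 : Tendsto (fun n : ℕ => ((1:ℝ)/2)^n) atTop (nhds 0) :=
      tendsto_pow_atTop_nhds_zero_of_lt_one (by norm_num) (by norm_num)
    have := tendsto_const_nhds (x := 2*(2/P^2 + 5*κ^2/P^3)) (f := atTop (α := ℕ)) |>.add
      (h0.const_mul 2)
    simpa using this
  exact ge_of_tendsto' hlim (fun n => hstep n 0)

set_option maxHeartbeats 1000000 in
lemma final_bound (P κ x y t : ℝ) (hP : (100:ℝ) ≤ P) (hκ2 : κ^2 ≤ P^2/100)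
    (hx0 : 0 < x) (hx1 : x ≤ 1) (hy0 : 0 < y) (hy1 : y ≤ 1)
    (hYb : |x - y| * P^3 ≤ 4*P + 10*κ^2)
    (ht : t * ((P+1)*(P-1)^2) = κ^2*(x*(y - x))*(P-1)^2 - κ^2*x^2*(3*P-1)) :
    |t| ≤ 5*κ^2/P^2 := by
  have hP0 : (0:ℝ) < P := by linarith
  have hD' : (0:ℝ) < (P+1)*(P-1)^2 :=
    mul_pos (by linarith) (pow_pos (by linarith) 2)
  set Y := |x - y| with hYdef
  have hYnn : 0 ≤ Y := abs_nonneg _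
  have hc1 : x*(y - x) ≤ Y := by
    have h1' : 0 ≤ x * (Y - (y - x)) :=
      mul_nonneg hx0.le (by
        have := neg_abs_le (x - y)
        rw [hYdef]; linarith)
    have h2' : 0 ≤ (1 - x) * Y := mul_nonneg (by linarith) hYnn
    nlinarith [h1', h2']
  have hc2 : -Y ≤ x*(y - x) := by
    have h1' : 0 ≤ x * ((y - x) + Y) :=
      mul_nonneg hx0.le (by
        have := le_abs_self (x - y)
        rw [hYdef]; linarith)
    have h2' : 0 ≤ (1 - x) * Y := mul_nonneg (by linarith) hYnn
    nlinarith [h1', h2']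
  have hsq : (P-1)^2 ≤ P^2 := by nlinarith
  -- κ^2 * Y * (P-1)^2 * P^2 ≤ κ^2*(4*P^2 + P^3/10)
  have hk1 : κ^2 * (Y * P^3) ≤ κ^2 * (4*P + 10*κ^2) :=
    mul_le_mul_of_nonneg_left hYb (sq_nonneg κ)
  have hk4 : κ^2*κ^2*P ≤ κ^2*(P^2/100)*P :=
    mul_le_mul_of_nonneg_right (mul_le_mul_of_nonneg_left hκ2 (sq_nonneg κ)) hP0.le
  have hmid : κ^2 * Y * (P-1)^2 * P^2 ≤ κ^2*(4*P^2 + P^3/10) := by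
    have e1 : κ^2 * Y * (P-1)^2 * P^2 ≤ κ^2 * Y * P^2 * P^2 := by
      have := mul_le_mul_of_nonneg_left hsq
        (mul_nonneg (mul_nonneg (sq_nonneg κ) hYnn) (sq_nonneg P))
      nlinarith [this]
    have e2 : κ^2 * Y * P^2 * P^2 ≤ κ^2 * (4*P + 10*κ^2) * P := by
      nlinarith [mul_le_mul_of_nonneg_right hk1 hP0.le]
    nlinarith [e1, e2, hk4]
  have hpoly : 4*P^2 + P^3/10 + (3*P-1)*P^2 ≤ 5*((P+1)*(P-1)^2) := by
    nlinarith [mul_le_mul_of_nonneg_right hP (sq_nonneg P), sq_nonneg P,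
      mul_le_mul_of_nonneg_right hP (by linarith : (0:ℝ) ≤ P)]
  rw [abs_le]
  constructor
  · rw [neg_le]
    rw [le_div_iff₀ (by positivity : (0:ℝ) < P^2)]
    refine le_of_mul_le_mul_right ?_ hD'
    have hexp : -t * P^2 * ((P+1)*(P-1)^2)
        = -(κ^2*(x*(y - x))*(P-1)^2 - κ^2*x^2*(3*P-1)) * P^2 := by
      linear_combination (-P^2) * ht
    rw [hexp]
    have hlow : -(κ^2*(x*(y - x))*(P-1)^2*P^2) ≤ κ^2 * Y * (P-1)^2 * P^2 := by
      have := mul_le_mul_of_nonneg_left hc2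
        (mul_nonneg (mul_nonneg (sq_nonneg κ) (sq_nonneg (P-1))) (sq_nonneg P))
      nlinarith [this]
    have hx2b : κ^2*x^2*(3*P-1)*P^2 ≤ κ^2*(3*P-1)*P^2 := by
      have hx2 : x^2 ≤ 1 := by nlinarith
      have := mul_le_mul_of_nonneg_left hx2
        (mul_nonneg (mul_nonneg (sq_nonneg κ) (by linarith : (0:ℝ) ≤ 3*P-1)) (sq_nonneg P))
      nlinarith [this]
    have hfin := mul_le_mul_of_nonneg_left hpoly (sq_nonneg κ)
    nlinarith [hlow, hx2b, hmid, hfin]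
  · rw [le_div_iff₀ (by positivity : (0:ℝ) < P^2)]
    refine le_of_mul_le_mul_right ?_ hD'
    have hexp : t * P^2 * ((P+1)*(P-1)^2) = (κ^2*(x*(y - x))*(P-1)^2 - κ^2*x^2*(3*P-1)) * P^2 := by
      linear_combination P^2 * ht
    rw [hexp]
    have hup : κ^2*(x*(y - x))*(P-1)^2*P^2 ≤ κ^2 * Y * (P-1)^2 * P^2 := by
      have := mul_le_mul_of_nonneg_left hc1
        (mul_nonneg (mul_nonneg (sq_nonneg κ) (sq_nonneg (P-1))) (sq_nonneg P))
      nlinarith [this]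
    have hdrop : 0 ≤ κ^2*x^2*(3*P-1)*P^2 :=
      mul_nonneg (mul_nonneg (mul_nonneg (sq_nonneg κ) (sq_nonneg x))
        (by linarith : (0:ℝ) ≤ 3*P-1)) (sq_nonneg P)
    have hfin := mul_le_mul_of_nonneg_left hpoly (sq_nonneg κ)
    nlinarith [hup, hdrop, hmid, hfin]

lemma sqrt_close {x : ℝ} (hx : 0 ≤ x) : |Real.sqrt x - 1| ≤ |x - 1| := by
  have h1 : Real.sqrt x ^ 2 = x := Real.sq_sqrt hx
  have h2 : 0 ≤ Real.sqrt x := Real.sqrt_nonneg x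
  rw [abs_le]
  constructor
  · nlinarith [le_abs_self (x-1), neg_abs_le (x-1), sq_nonneg (Real.sqrt x - 1),
      sq_nonneg (Real.sqrt x + 1), abs_nonneg (x-1)]
  · nlinarith [le_abs_self (x-1), neg_abs_le (x-1), sq_nonneg (Real.sqrt x - 1),
      sq_nonneg (Real.sqrt x + 1), abs_nonneg (x-1)]

set_option maxHeartbeats 1000000 in
lemma key (p : ℕ) (κ : ℝ) (hp : (100:ℝ) ≤ (p:ℝ)) (hκ0 : 0 < κ) (hκ : κ ≤ (p:ℝ)/10) :
    |(p:ℝ) * etilde2 p κ - 1| ≤ 5 * κ^2 / (p:ℝ)^2 := by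
  have hpN : 100 ≤ p := by exact_mod_cast hp
  set P : ℝ := (p:ℝ) with hPdef
  set M : ℕ → ℝ := fun j => mInt (p + 2*j) κ 0 with hM
  set ρ : ℕ → ℝ := fun j => M (j+1) / M j with hρ
  have hM5 : ∀ j : ℕ, 5 ≤ p + 2*j := fun j => by omega
  have hMpos : ∀ j, 0 < M j := fun j => mInt_pos _ (hM5 j) κ
  have hMidx : ∀ j : ℕ, M (j+1) = mInt (p + 2*j + 2) κ 0 := by
    intro j
    rw [hM]
    exact congrArg (fun t => mInt t κ 0) (by ring : p + 2*(j+1) = p + 2*j + 2)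
  have hMsub : ∀ j : ℕ, M (j+1) = M j - mInt (p + 2*j) κ 2 := by
    intro j
    rw [hMidx j, hM]
    exact mInt_succ _ (hM5 j) κ 0
  clear_value M
  have hρpos : ∀ j, 0 < ρ j := by
    intro j
    rw [hρ]
    exact div_pos (hMpos (j+1)) (hMpos j)
  have hρ1 : ∀ j, ρ j ≤ 1 := by
    intro j
    rw [hρ]
    dsimp only
    refine div_le_one_of_le₀ ?_ (hMpos j).le
    have := mInt_sq_nonneg (p + 2*j) κ 1
    have h2 : mInt (p + 2*j) κ (2*1) = mInt (p + 2*j) κ 2 := by norm_num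
    rw [h2] at this
    linarith [hMsub j]
  have hE : ∀ j : ℕ, (P + 2*j) * (1 - ρ j) * (P + 2*j + 1)
      = (P + 2*j + 1) + κ^2 * (ρ j * ρ (j+1)) := by
    intro j
    have hq5 : 5 ≤ p + 2*j := hM5 j
    have f1 := ibp1 (p + 2*j) hq5 κ
    have f2 := ibp0 (p + 2*j + 2) (by omega) κ
    have f3 := mInt_succ (p + 2*j) hq5 κ 0
    -- translate everything to M's
    have g0 : mInt (p + 2*j) κ 0 = M j := by rw [hM]
    have g1 : mInt (p + 2*j + 2) κ 0 = M (j+1) := (hMidx j).symm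
    have g2 : mInt (p + 2*j + 2 + 2) κ 0 = M (j+2) := by
      rw [hMidx (j+1)]
      exact congrArg (fun t => mInt t κ 0) (by ring : p + 2*j + 2 + 2 = p + 2*(j+1) + 2)
    rw [g1, g0] at f3
    rw [g2] at f2
    -- f1 : (↑(p+2j) - 1) * mInt (p+2j) κ 2 = mInt (p+2j+2) κ 0 + κ * mInt (p+2j+2) κ 1
    rw [g1] at f1
    have hm2 : mInt (p + 2*j) κ 2 = M j - M (j+1) := by linarith [hMsub j]
    rw [hm2] at f1
    have hc1 : ((p + 2*j : ℕ) : ℝ) = P + 2*j := by push_cast; ring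
    have hc2 : ((p + 2*j + 2 : ℕ) : ℝ) = P + 2*j + 2 := by push_cast; ring
    rw [hc1] at f1
    rw [hc2] at f2
    have hmain : ((P + 2*j) - 1) * (M j - M (j+1)) * ((P + 2*j) + 1)
        = M (j+1) * ((P + 2*j) + 1) + κ^2 * M (j+2) := by
      linear_combination ((P + 2*j) + 1) * f1 + κ * f2
    have h0 := (hMpos j).ne'
    have h1 := (hMpos (j+1)).ne'
    have hρρ : ρ j * ρ (j+1) = M (j+2) / M j := by
      rw [hρ]
      dsimp only
      field_simp
    have h1ρ : 1 - ρ j = (M j - M (j+1)) / M j := by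
      rw [hρ]
      field_simp
    rw [hρρ, h1ρ]
    field_simp
    linear_combination hmain
  clear_value ρ
  have hq100 : κ^2 ≤ P^2/100 := by nlinarith
  have hY0 := abstract_seq P κ hp hq100 ρ hρpos hρ1 hE
  have hY0' : |ρ 0 - ρ 1| * P^3 ≤ 4*P + 10*κ^2 := by
    have hP0 : (0:ℝ) < P := by linarith
    have h := mul_le_mul_of_nonneg_right hY0 (by positivity : (0:ℝ) ≤ P^3)
    have he : (2*(2/P^2 + 5*κ^2/P^3))*P^3 = 4*P + 10*κ^2 := by
      field_simp
      ring
    linarith [he.le, he.ge]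
  have hPne : P - 1 ≠ 0 := ne_of_gt (by linarith : (0:ℝ) < P - 1)
  have hpN5 : 5 ≤ p := by omega
  have hf0 := ibp0 p hpN5 κ
  have g0 : mInt p κ 0 = M 0 := by
    rw [hM]
    try norm_num
  have g1 : mInt (p + 2) κ 0 = M 1 := by
    rw [hM]
    try norm_num
  rw [g1] at hf0
  have hm1v : mInt p κ 1 = κ * M 1 / (P - 1) := by
    rw [eq_div_iff hPne]
    linear_combination hf0
  have hm2v : mInt p κ 2 = M 0 - M 1 := by
    have h := hMsub 0
    have g2 : mInt (p + 2*0) κ 2 = mInt p κ 2 :=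
      congrArg (fun t => mInt t κ 2) (by norm_num)
    rw [g2] at h
    linarith
  have h0 := (hMpos 0).ne'
  have h1 := (hMpos 1).ne'
  have he2v : e2 p κ = 1 - ρ 0 := by
    rw [e2, hm2v, g0, hρ]
    dsimp only
    field_simp
  have he1v : e1 p κ = κ * ρ 0 / (P - 1) := by
    rw [e1, hm1v, g0, hρ]
    dsimp only
    field_simp
  have hE0 : P * (1 - ρ 0) * (P + 1) = (P + 1) + κ^2 * (ρ 0 * ρ 1) := by
    have h := hE 0
    push_cast at h
    linear_combination h
  have hΔ : (P * etilde2 p κ - 1) * ((P+1)*(P-1)^2)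
      = κ^2*(ρ 0*(ρ 1 - ρ 0))*(P-1)^2 - κ^2*(ρ 0)^2*(3*P-1) := by
    rw [etilde2, he2v, he1v]
    field_simp
    linear_combination ((P-1)^2) * hE0
  exact final_bound P κ (ρ 0) (ρ 1) _ hp hq100 (hρpos 0) (hρ1 0) (hρpos 1) (hρ1 1) hY0' hΔ

theorem sqrt_p_etilde2_sub_one_bigO (p : ℕ → ℕ) (hp2 : ∀ n, 2 ≤ p n)
    (hp : Tendsto (fun n => (p n : ℝ)) atTop atTop)
    (κ : ℕ → ℝ) (hκ : ∀ n, 0 < κ n)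
    (hκp : Tendsto (fun n => κ n / (p n : ℝ)) atTop (nhds 0)) :
    ∃ C : ℝ, ∀ n,
      |((p n : ℝ) ^ 2 / (κ n) ^ 2) *
          (Real.sqrt ((p n : ℝ) * etilde2 (p n) (κ n)) - 1)| ≤ C := by
  have h1 : ∀ᶠ (n : ℕ) in atTop, (100:ℝ) ≤ (p n : ℝ) := hp.eventually_ge_atTop 100
  have h2 : ∀ᶠ (n : ℕ) in atTop, κ n / (p n : ℝ) < 1/10 :=
    hκp.eventually (gt_mem_nhds (by norm_num : (0:ℝ) < 1/10))
  obtain ⟨N, hN⟩ := eventually_atTop.mp (h1.and h2)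
  set f : ℕ → ℝ := fun n => |((p n : ℝ) ^ 2 / (κ n) ^ 2) *
      (Real.sqrt ((p n : ℝ) * etilde2 (p n) (κ n)) - 1)| with hf
  refine ⟨5 + ∑ i ∈ Finset.range N, f i, fun n => ?_⟩
  have hsumnn : 0 ≤ ∑ i ∈ Finset.range N, f i :=
    Finset.sum_nonneg fun i _ => abs_nonneg _
  by_cases hn : n < N
  · have hle : f n ≤ ∑ i ∈ Finset.range N, f i :=
      Finset.single_le_sum (fun i _ => abs_nonneg _) (Finset.mem_range.mpr hn)
    calc f n ≤ ∑ i ∈ Finset.range N, f i := hle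
      _ ≤ 5 + ∑ i ∈ Finset.range N, f i := by linarith
  · push_neg at hn
    obtain ⟨hp100, hr⟩ := hN n hn
    have hppos : (0:ℝ) < (p n : ℝ) := by linarith
    have hκp10 : κ n ≤ (p n : ℝ)/10 := by
      rw [div_lt_iff₀ hppos] at hr
      linarith
    have hkey := key (p n) (κ n) hp100 (hκ n) hκp10
    have hb : 5*(κ n)^2/(p n : ℝ)^2 ≤ 1/20 := by
      rw [div_le_iff₀ (by positivity)]
      nlinarith [hκ n, hκp10, hp100]
    have hx0 : 0 ≤ (p n : ℝ) * etilde2 (p n) (κ n) := by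
      have := abs_le.mp hkey
      linarith [this.1]
    have hs := (sqrt_close hx0).trans hkey
    have hκne : κ n ≠ 0 := (hκ n).ne'
    have hpne : (p n : ℝ) ≠ 0 := hppos.ne'
    calc f n = ((p n : ℝ)^2/(κ n)^2) *
          |Real.sqrt ((p n : ℝ) * etilde2 (p n) (κ n)) - 1| := by
          rw [hf]
          dsimp only
          rw [abs_mul, abs_of_nonneg (by positivity : (0:ℝ) ≤ (p n : ℝ)^2/(κ n)^2)]
      _ ≤ ((p n : ℝ)^2/(κ n)^2) * (5 * (κ n)^2 / (p n : ℝ)^2) :=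
          mul_le_mul_of_nonneg_left hs (by positivity)
      _ = 5 := by
          field_simp
      _ ≤ 5 + ∑ i ∈ Finset.range N, f i := by linarith
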